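/- If X is a binomial random variable with cl trials and success probability 1/r, and k = l/r, then Pr[X < a] ≤ e^(−ck + (a−1)/r) · ((ck)^a − 1)/(ck − 1), provided ck ≠ 1. -/
import Mathlib


open Finset Real

/-- If X ~ Binomial(cl, 1/r) and k = l/r, then
    Pr[X < a] ≤ exp(-ck + (a-1)/r) * ((ck)^a - 1)/(ck - 1), provided ck ≠ 1. -/
theorem binomial_tail_bound (c l r a : ℕ) (hc : 0 < c) (hl : 0 < l) (hr : 1 ≤ r)
    (ha : 1 ≤ a) (k : ℝ) (hk : k = (l : ℝ) / (r : ℝ)) (hck : (c : ℝ) * k ≠ 1) :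
    ∑ i ∈ Finset.range a,
        ((c * l).choose i : ℝ) * (1 / (r : ℝ)) ^ i * (1 - 1 / (r : ℝ)) ^ (c * l - i) ≤
      Real.exp (-((c : ℝ) * k) + ((a : ℝ) - 1) / (r : ℝ)) *
        (((c : ℝ) * k) ^ a - 1) / ((c : ℝ) * k - 1) := by
  have hr0 : (0:ℝ) < r := by exact_mod_cast hr
  have hrr : (1:ℝ)/r ≤ 1 := by
    rw [div_le_one hr0]; exact_mod_cast hr
  have hckeq : (c : ℝ) * k = (c * l : ℕ) / r := by
    rw [hk]; push_cast; ring
  rw [mul_div_assoc, ← geom_sum_eq hck, Finset.mul_sum]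
  apply Finset.sum_le_sum
  intro i hi
  have hia : (i : ℝ) ≤ (a : ℝ) - 1 := by
    have : i + 1 ≤ a := Finset.mem_range.mp hi
    have : (i:ℝ) + 1 ≤ a := by exact_mod_cast this
    linarith
  set n := c * l with hn
  by_cases hin : i ≤ n
  · -- main chain
    have h1 : ((n.choose i : ℕ) : ℝ) ≤ (n : ℝ) ^ i := by
      exact_mod_cast Nat.choose_le_pow n i
    have hbase : (0:ℝ) ≤ 1 - 1/r := by linarith
    have h2 : (1 - 1/(r:ℝ)) ^ (n - i) ≤ Real.exp (-(((n:ℝ) - i)/r)) := by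
      have hb : 1 - 1/(r:ℝ) ≤ Real.exp (-(1/r)) := by
        have := Real.add_one_le_exp (-(1/(r:ℝ)))
        linarith
      calc (1 - 1/(r:ℝ)) ^ (n - i) ≤ (Real.exp (-(1/r))) ^ (n - i) :=
            pow_le_pow_left₀ hbase hb _
        _ = Real.exp (-(((n - i : ℕ):ℝ)/r)) := by
            rw [← Real.exp_nat_mul]; ring_nf
        _ = Real.exp (-(((n:ℝ) - i)/r)) := by
            congr 1
            rw [Nat.cast_sub hin]
    have hnr : (0:ℝ) ≤ (n:ℝ) := Nat.cast_nonneg n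
    have hpow : ((n.choose i : ℕ) : ℝ) * (1/(r:ℝ))^i * (1 - 1/(r:ℝ)) ^ (n - i)
        ≤ (n:ℝ)^i * (1/r)^i * Real.exp (-(((n:ℝ) - i)/r)) := by
      have hA : ((n.choose i : ℕ) : ℝ) * (1/(r:ℝ))^i ≤ (n:ℝ)^i * (1/r)^i :=
        mul_le_mul_of_nonneg_right h1 (by positivity)
      have hB : (0:ℝ) ≤ ((n.choose i : ℕ) : ℝ) * (1/(r:ℝ))^i := by positivity
      exact mul_le_mul hA h2 (pow_nonneg hbase _) (by positivity)
    refine hpow.trans ?_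
    have hck0 : (0:ℝ) < (c:ℝ)*k := by rw [hckeq]; positivity
    have heq : (n:ℝ)^i * (1/r)^i = ((c:ℝ)*k)^i := by
      rw [← mul_pow, mul_one_div, hckeq]
    rw [heq, mul_comm]
    apply mul_le_mul_of_nonneg_right _ (pow_nonneg hck0.le i)
    apply Real.exp_le_exp.mpr
    rw [hckeq]
    have h3 : ((i:ℝ))/r ≤ ((a:ℝ)-1)/r := by gcongr
    have h4 : -(((n:ℝ) - i)/r) = -((n:ℝ)/r) + (i:ℝ)/r := by ring
    linarith [h4.le]
  · -- choose = 0
    have : n.choose i = 0 := Nat.choose_eq_zero_of_lt (lt_of_not_ge hin)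
    rw [this]
    simp only [Nat.cast_zero, zero_mul]
    have hck0 : (0:ℝ) < (c:ℝ)*k := by rw [hckeq]; positivity
    exact mul_nonneg (Real.exp_pos _).le (pow_nonneg hck0.le _)
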